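/- If a sequence (p_n)_{n≥0} of non-negative reals with positive partial sums P_n has finite upper growth rate, i.e. limsup_{n→∞} n·p_n/P_n < ∞, then lim_{n→∞} P_{n-1}/P_n = 1. -/

import Mathlib

open Filter Finset

/-- Finite upper growth rate implies P_{n-1}/P_n → 1. -/
theorem ratio_tendsto_one (p : ℕ → ℝ) (hp : ∀ n, 0 ≤ p n)
    (P : ℕ → ℝ) (hP : ∀ n, P n = ∑ k ∈ Finset.range (n + 1), p k)
    (hPpos : ∀ n, 0 < P n)
    (hgrowth : Filter.limsup (fun n : ℕ => (((n : ℝ) * p n / P n : ℝ) : EReal)) Filter.atTop < ⊤) :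
    Filter.Tendsto (fun n : ℕ => P (n - 1) / P n) Filter.atTop (nhds 1) := by
  -- obtain a real bound C on n * p n / P n eventually
  obtain ⟨C, hC1, -⟩ := EReal.lt_iff_exists_real_btwn.mp hgrowth
  have hev : ∀ᶠ n : ℕ in atTop, ((n : ℝ) * p n / P n : ℝ) < C := by
    have := Filter.eventually_lt_of_limsup_lt hC1
    filter_upwards [this] with n hn
    exact_mod_cast hn
  -- p n / P n → 0
  have h0 : Tendsto (fun n : ℕ => p n / P n) atTop (nhds 0) := by
    apply squeeze_zero' (Filter.Eventually.of_forall fun n => div_nonneg (hp n) (hPpos n).le)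
      ?_ (tendsto_const_div_atTop_nhds_zero_nat C)
    filter_upwards [hev, Filter.eventually_ge_atTop 1] with n hn hn1
    have hnpos : (0:ℝ) < n := by exact_mod_cast hn1
    have heq : p n / P n = ((n : ℝ) * p n / P n) / n := by
      field_simp
    rw [heq]
    exact (div_le_div_iff_of_pos_right hnpos).mpr hn.le
  -- rewrite P (n-1)/P n = 1 - p n / P n for n ≥ 1
  have hcong : ∀ᶠ n : ℕ in atTop, 1 - p n / P n = P (n - 1) / P n := by
    filter_upwards [Filter.eventually_ge_atTop 1] with n hn
    have hPn : P n = P (n - 1) + p n := by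
      rw [hP, hP]
      have : n - 1 + 1 = n := Nat.succ_pred_eq_of_pos hn
      rw [this, Finset.sum_range_succ]
    have hPne : P n ≠ 0 := (hPpos n).ne'
    rw [eq_div_iff hPne, sub_mul, one_mul, div_mul_cancel₀ _ hPne, hPn]
    ring
  have := (tendsto_const_nhds (x := (1:ℝ)) (f := atTop)).sub h0
  rw [sub_zero] at this
  exact Tendsto.congr' hcong this
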